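/- Let phi_n(a,b) = sum_{k=0}^n [n choose k]_q * (-b)^k q^{binom(k,2)} / (1 - a q^{n-k}), where [n choose k]_q is the Gaussian binomial coefficient. Then for n ≥ 1, phi_n(a,b) = phi_{n-1}(aq, bq) - b * phi_{n-1}(a, bq). -/

import Mathlib

open Finset

/-- The q-Pochhammer symbol `(a; q)_n = ∏_{j=0}^{n-1} (1 - a q^j)`. -/
noncomputable def qPoch (a q : ℂ) (n : ℕ) : ℂ := ∏ j ∈ Finset.range n, (1 - a * q ^ j)

/-- The Gaussian binomial coefficient `[n choose k]_q = (q;q)_n / ((q;q)_k (q;q)_{n-k})`. -/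
noncomputable def qBinom (q : ℂ) (n k : ℕ) : ℂ :=
  qPoch q q n / (qPoch q q k * qPoch q q (n - k))

/-- `φ_n(a,b) = ∑_{k=0}^n [n choose k]_q (-b)^k q^{C(k,2)} / (1 - a q^{n-k})`. -/
noncomputable def phi (q a b : ℂ) (n : ℕ) : ℂ :=
  ∑ k ∈ range (n + 1), qBinom q n k * (-b) ^ k * q ^ (k.choose 2) / (1 - a * q ^ (n - k))

lemma qPoch_succ (a q : ℂ) (n : ℕ) : qPoch a q (n+1) = qPoch a q n * (1 - a * q ^ n) := by
  simp [qPoch, Finset.prod_range_succ]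

lemma one_sub_ne (q : ℂ) (hq : ‖q‖ < 1) (i : ℕ) :
    (1 : ℂ) - q * q ^ i ≠ 0 := by
  intro h
  have h1 : q * q ^ i = 1 := by linear_combination -h
  have : ‖q * q ^ i‖ < 1 := by
    rw [norm_mul, norm_pow]
    calc ‖q‖ * ‖q‖ ^ i ≤ ‖q‖ * 1 := by
          exact mul_le_mul_of_nonneg_left (pow_le_one₀ (norm_nonneg q) hq.le)
            (norm_nonneg q)
      _ = ‖q‖ := mul_one _
      _ < 1 := hq
  rw [h1] at this; simp at this

lemma qPoch_ne (q : ℂ) (hq : ‖q‖ < 1) (n : ℕ) : qPoch q q n ≠ 0 := by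
  induction n with
  | zero => simp [qPoch]
  | succ n ih => rw [qPoch_succ]; exact mul_ne_zero ih (one_sub_ne q hq n)

lemma qBinom_zero (q : ℂ) (hq : ‖q‖ < 1) (n : ℕ) : qBinom q n 0 = 1 := by
  simp only [qBinom, Nat.sub_zero, show qPoch q q 0 = 1 by simp [qPoch], one_mul]
  exact div_self (qPoch_ne q hq n)

lemma qBinom_self (q : ℂ) (hq : ‖q‖ < 1) (n : ℕ) : qBinom q n n = 1 := by
  simp only [qBinom, Nat.sub_self, show qPoch q q 0 = 1 by simp [qPoch], mul_one]
  exact div_self (qPoch_ne q hq n)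

lemma qBinom_pascal (q : ℂ) (hq : ‖q‖ < 1) (i r : ℕ) :
    qBinom q (i + r + 2) (i + 1)
      = q ^ (i+1) * qBinom q (i + r + 1) (i + 1) + qBinom q (i + r + 1) i := by
  have hPi := qPoch_ne q hq i
  have hPr := qPoch_ne q hq r
  have hPm := qPoch_ne q hq (i + r + 1)
  have h1 := one_sub_ne q hq i
  have h2 := one_sub_ne q hq r
  unfold qBinom
  have e1 : i + r + 2 - (i + 1) = r + 1 := by omega
  have e2 : i + r + 1 - (i + 1) = r := by omega
  have e3 : i + r + 1 - i = r + 1 := by omega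
  rw [e1, e2, e3]
  rw [show i + r + 2 = (i + r + 1) + 1 from rfl, qPoch_succ q q (i+r+1),
    qPoch_succ q q i, qPoch_succ q q r]
  field_simp
  ring

/-- The recurrence `φ_n(a,b) = φ_{n-1}(aq, bq) - b φ_{n-1}(a, bq)` for `n ≥ 1`. -/
theorem phi_recurrence (n : ℕ) (hn : 1 ≤ n) (a b q : ℂ) (hq : ‖q‖ < 1)
    (ha : ∀ j ≤ n, a * q ^ j ≠ 1) :
    phi q a b n = phi q (a * q) (b * q) (n - 1) - b * phi q a (b * q) (n - 1) := by
  obtain ⟨m, rfl⟩ : ∃ m, n = m + 1 := ⟨n - 1, by omega⟩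
  simp only [Nat.add_sub_cancel]
  unfold phi
  set f : ℕ → ℂ := fun k => qBinom q (m+1) k * (-b) ^ k * q ^ (k.choose 2) / (1 - a * q ^ (m + 1 - k)) with hf
  set g : ℕ → ℂ := fun k => qBinom q m k * (-(b*q)) ^ k * q ^ (k.choose 2) / (1 - (a*q) * q ^ (m - k)) with hg
  set h : ℕ → ℂ := fun k => qBinom q m k * (-(b*q)) ^ k * q ^ (k.choose 2) / (1 - a * q ^ (m - k)) with hh
  have ec : ∀ i : ℕ, (i+1).choose 2 = i.choose 2 + i := by
    intro i
    rw [show (i+1).choose 2 = i.choose 1 + i.choose 2 from Nat.choose_succ_succ i 1,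
      Nat.choose_one_right]
    omega
  have key : ∀ i ∈ range m, f (i+1) = g (i+1) - b * h i := by
    intro i hi
    rw [mem_range] at hi
    obtain ⟨r, hr⟩ : ∃ r, m = i + r + 1 := ⟨m - i - 1, by omega⟩
    subst hr
    simp only [hf, hg, hh]
    rw [qBinom_pascal q hq i r]
    have e1 : i + r + 1 + 1 - (i + 1) = r + 1 := by omega
    have e2 : i + r + 1 - (i + 1) = r := by omega
    have e3 : i + r + 1 - i = r + 1 := by omega
    rw [e1, e2, e3, ec]
    rw [show (1 : ℂ) - a * q * q ^ r = 1 - a * q ^ (r+1) by ring]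
    rw [← mul_div_assoc, ← sub_div]
    congr 1
    ring
  have h0 : f 0 = g 0 := by
    simp only [hf, hg, Nat.sub_zero, pow_zero, qBinom_zero q hq]
    rw [show (1 : ℂ) - a * q * q ^ m = 1 - a * q ^ (m+1) by ring]
  have hm : f (m+1) = -(b * h m) := by
    simp only [hf, hh, Nat.sub_self, pow_zero, qBinom_self q hq, ec]
    rw [← mul_div_assoc, ← neg_div]
    congr 1
    ring
  calc ∑ k ∈ range (m+1+1), f k
      = (∑ i ∈ range m, f (i+1) + f 0) + f (m+1) := by
        rw [Finset.sum_range_succ, Finset.sum_range_succ']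
    _ = (∑ i ∈ range m, (g (i+1) - b * h i) + g 0) + -(b * h m) := by
        rw [Finset.sum_congr rfl key, h0, hm]
    _ = (∑ i ∈ range m, g (i+1) + g 0) - b * (∑ i ∈ range m, h i + h m) := by
        rw [Finset.sum_sub_distrib, ← Finset.mul_sum]; ring
    _ = ∑ k ∈ range (m+1), g k - b * ∑ k ∈ range (m+1), h k := by
        rw [Finset.sum_range_succ', Finset.sum_range_succ]
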